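/- Consider the action ρ of the torus (ℂˣ)² on ℂ⁶ given by ρ(λ₁,λ₂)·(v₀,v₁,v₂,w₀,w₁,w₂) = (λ₁⁻³λ₂⁻³v₀, λ₁³v₁, λ₂³v₂, λ₁⁻²λ₂⁻²w₀, λ₁²w₁, λ₂²w₂). For every point (v₀,v₁,v₂,w₀,w₁,w₂) ∈ ℂ⁶, the origin 0 ∈ ℂ⁶ lies in the topological closure of the orbit {ρ(λ₁,λ₂)·(v,w) : λ₁,λ₂ ∈ ℂˣ} if and only if (v₀ = 0 and w₀ = 0) or (v₁ = 0 and w₁ = 0) or (v₂ = 0 and w₂ = 0). (Equivalently: the unstable locus of the induced action on ℙ⁵, the exceptional divisor of the Kirwan blowup of the Luna slice at the 3A₂ cubic, is the union of the three codimension-two loci {Tᵢ = T_{î} = 0}, i = 0,1,2.) -/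

import Mathlib

open Filter Topology

/-- The torus (ℂˣ)² action on ℂ⁶ (coordinates (v₀,v₁,v₂,w₀,w₁,w₂)) induced by the
identity component of the stabilizer of the 3A₂ cubic on the affine cone over the
exceptional ℙ⁵ of the Kirwan blowup:
ρ(λ₁,λ₂)·(v,w) = (λ₁⁻³λ₂⁻³v₀, λ₁³v₁, λ₂³v₂, λ₁⁻²λ₂⁻²w₀, λ₁²w₁, λ₂²w₂). -/
noncomputable def torusAct (l1 l2 : ℂ) (v w : Fin 3 → ℂ) :
    (Fin 3 → ℂ) × (Fin 3 → ℂ) :=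
  (![l1⁻¹ ^ 3 * l2⁻¹ ^ 3 * v 0, l1 ^ 3 * v 1, l2 ^ 3 * v 2],
   ![l1⁻¹ ^ 2 * l2⁻¹ ^ 2 * w 0, l1 ^ 2 * w 1, l2 ^ 2 * w 2])

/-- Real invariant separating the origin from the orbit. -/
noncomputable def kirF : (Fin 3 → ℂ) × (Fin 3 → ℂ) → ℝ :=
  fun q => ∏ i : Fin 3, (‖q.1 i‖ ^ 2 + ‖q.2 i‖ ^ 3)

lemma kirF_continuous : Continuous kirF := by
  apply continuous_finset_prod
  intro i _
  exact (((continuous_apply i).comp continuous_fst).norm.pow 2).add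
    (((continuous_apply i).comp continuous_snd).norm.pow 3)

lemma kirF_invariant (v w : Fin 3 → ℂ) {l1 l2 : ℂ} (h1 : l1 ≠ 0) (h2 : l2 ≠ 0) :
    kirF (torusAct l1 l2 v w) = kirF (v, w) := by
  have n1 : ‖l1‖ ≠ 0 := norm_ne_zero_iff.mpr h1
  have n2 : ‖l2‖ ≠ 0 := norm_ne_zero_iff.mpr h2
  simp only [kirF, torusAct, Fin.prod_univ_three, Matrix.cons_val_zero,
    Matrix.cons_val_one, Matrix.head_cons, Matrix.cons_val_two, Matrix.tail_cons,
    norm_mul, norm_pow, norm_inv]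
  field_simp

lemma kirF_zero : kirF (0 : (Fin 3 → ℂ) × (Fin 3 → ℂ)) = 0 := by
  simp [kirF, Fin.prod_univ_three]

lemma mem_closure_of_seq (v w : Fin 3 → ℂ) (a b : ℕ → ℂ)
    (ha : ∀ n, a n ≠ 0) (hb : ∀ n, b n ≠ 0)
    (h : Tendsto (fun n => torusAct (a n) (b n) v w) atTop
      (𝓝 (0 : (Fin 3 → ℂ) × (Fin 3 → ℂ)))) :
    (0 : (Fin 3 → ℂ) × (Fin 3 → ℂ)) ∈
        closure {q : (Fin 3 → ℂ) × (Fin 3 → ℂ) |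
          ∃ l1 l2 : ℂ, l1 ≠ 0 ∧ l2 ≠ 0 ∧ q = torusAct l1 l2 v w} :=
  mem_closure_of_tendsto h (Eventually.of_forall fun n => ⟨a n, b n, ha n, hb n, rfl⟩)

theorem unstable_locus_kirwan_blowup (v w : Fin 3 → ℂ) :
    (0 : (Fin 3 → ℂ) × (Fin 3 → ℂ)) ∈
        closure {q : (Fin 3 → ℂ) × (Fin 3 → ℂ) |
          ∃ l1 l2 : ℂ, l1 ≠ 0 ∧ l2 ≠ 0 ∧ q = torusAct l1 l2 v w} ↔
      (v 0 = 0 ∧ w 0 = 0) ∨ (v 1 = 0 ∧ w 1 = 0) ∨ (v 2 = 0 ∧ w 2 = 0) := by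
  set s : ℕ → ℂ := fun n => (n : ℂ) + 1 with hs
  have hsne : ∀ n, s n ≠ 0 := fun n => Nat.cast_add_one_ne_zero n
  have hts : Tendsto (fun n => (s n)⁻¹) atTop (𝓝 (0 : ℂ)) := by
    have h1 : Tendsto (fun n : ℕ => ((1 / ((n : ℝ) + 1) : ℝ) : ℂ)) atTop
        (𝓝 ((0 : ℝ) : ℂ)) :=
      (Complex.continuous_ofReal.tendsto 0).comp tendsto_one_div_add_atTop_nhds_zero_nat
    simp only [Complex.ofReal_zero] at h1
    refine h1.congr fun n => ?_
    push_cast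
    rw [one_div]
  have key : ∀ k : ℕ, 0 < k → ∀ c : ℂ,
      Tendsto (fun n => (s n)⁻¹ ^ k * c) atTop (𝓝 0) := by
    intro k hk c
    simpa [zero_pow hk.ne'] using (hts.pow k).mul_const c
  constructor
  · intro h
    by_contra hc
    push_neg at hc
    obtain ⟨h0, h1, h2⟩ := hc
    have hpos : ∀ i : Fin 3, 0 < ‖v i‖ ^ 2 + ‖w i‖ ^ 3 := by
      intro i
      have hor : v i ≠ 0 ∨ w i ≠ 0 := by
        fin_cases i
        · rcases eq_or_ne (v 0) 0 with hv | hv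
          · exact Or.inr (h0 hv)
          · exact Or.inl hv
        · rcases eq_or_ne (v 1) 0 with hv | hv
          · exact Or.inr (h1 hv)
          · exact Or.inl hv
        · rcases eq_or_ne (v 2) 0 with hv | hv
          · exact Or.inr (h2 hv)
          · exact Or.inl hv
      rcases hor with hv | hw
      · have : 0 < ‖v i‖ ^ 2 := pow_pos (norm_pos_iff.mpr hv) 2
        have h3 : 0 ≤ ‖w i‖ ^ 3 := by positivity
        linarith
      · have : 0 < ‖w i‖ ^ 3 := pow_pos (norm_pos_iff.mpr hw) 3
        have h3 : 0 ≤ ‖v i‖ ^ 2 := by positivity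
        linarith
    have hFpos : 0 < kirF (v, w) := Finset.prod_pos fun i _ => hpos i
    have hmaps : Set.MapsTo kirF
        {q : (Fin 3 → ℂ) × (Fin 3 → ℂ) |
          ∃ l1 l2 : ℂ, l1 ≠ 0 ∧ l2 ≠ 0 ∧ q = torusAct l1 l2 v w}
        {kirF (v, w)} := by
      rintro q ⟨l1, l2, hl1, hl2, rfl⟩
      exact kirF_invariant v w hl1 hl2
    have hmem := map_mem_closure kirF_continuous h hmaps
    rw [closure_singleton, Set.mem_singleton_iff, kirF_zero] at hmem
    exact hFpos.ne hmem
  · rintro (⟨hv, hw⟩ | ⟨hv, hw⟩ | ⟨hv, hw⟩)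
    · apply mem_closure_of_seq v w (fun n => (s n)⁻¹) (fun n => (s n)⁻¹)
        (fun n => inv_ne_zero (hsne n)) (fun n => inv_ne_zero (hsne n))
      simp only [torusAct, hv, hw, mul_zero]
      refine Tendsto.prodMk_nhds (tendsto_pi_nhds.mpr fun i => ?_)
        (tendsto_pi_nhds.mpr fun i => ?_) <;> fin_cases i
      · refine (tendsto_congr fun n => ?_).mpr (tendsto_const_nhds (x := (0 : ℂ)))
        simp
      · refine (tendsto_congr fun n => ?_).mpr (key 3 (by norm_num) (v 1))
        simp
      · refine (tendsto_congr fun n => ?_).mpr (key 3 (by norm_num) (v 2))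
        simp
      · refine (tendsto_congr fun n => ?_).mpr (tendsto_const_nhds (x := (0 : ℂ)))
        simp
      · refine (tendsto_congr fun n => ?_).mpr (key 2 (by norm_num) (w 1))
        simp
      · refine (tendsto_congr fun n => ?_).mpr (key 2 (by norm_num) (w 2))
        simp
    · apply mem_closure_of_seq v w (fun n => s n ^ 2) (fun n => (s n)⁻¹)
        (fun n => pow_ne_zero 2 (hsne n)) (fun n => inv_ne_zero (hsne n))
      simp only [torusAct, hv, hw, mul_zero]
      refine Tendsto.prodMk_nhds (tendsto_pi_nhds.mpr fun i => ?_)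
        (tendsto_pi_nhds.mpr fun i => ?_) <;> fin_cases i
      · refine (tendsto_congr fun n => ?_).mpr (key 3 (by norm_num) (v 0))
        simp only [Fin.zero_eta, Matrix.cons_val_zero, Pi.zero_apply]
        show _ = _
        field_simp [hsne n]
      · refine (tendsto_congr fun n => ?_).mpr (tendsto_const_nhds (x := (0 : ℂ)))
        simp
      · refine (tendsto_congr fun n => ?_).mpr (key 3 (by norm_num) (v 2))
        simp
      · refine (tendsto_congr fun n => ?_).mpr (key 2 (by norm_num) (w 0))
        simp only [Fin.zero_eta, Matrix.cons_val_zero, Pi.zero_apply]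
        show _ = _
        field_simp [hsne n]
      · refine (tendsto_congr fun n => ?_).mpr (tendsto_const_nhds (x := (0 : ℂ)))
        simp
      · refine (tendsto_congr fun n => ?_).mpr (key 2 (by norm_num) (w 2))
        simp
    · apply mem_closure_of_seq v w (fun n => (s n)⁻¹) (fun n => s n ^ 2)
        (fun n => inv_ne_zero (hsne n)) (fun n => pow_ne_zero 2 (hsne n))
      simp only [torusAct, hv, hw, mul_zero]
      refine Tendsto.prodMk_nhds (tendsto_pi_nhds.mpr fun i => ?_)
        (tendsto_pi_nhds.mpr fun i => ?_) <;> fin_cases i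
      · refine (tendsto_congr fun n => ?_).mpr (key 3 (by norm_num) (v 0))
        simp only [Fin.zero_eta, Matrix.cons_val_zero, Pi.zero_apply]
        show _ = _
        field_simp [hsne n]
      · refine (tendsto_congr fun n => ?_).mpr (key 3 (by norm_num) (v 1))
        simp
      · refine (tendsto_congr fun n => ?_).mpr (tendsto_const_nhds (x := (0 : ℂ)))
        simp
      · refine (tendsto_congr fun n => ?_).mpr (key 2 (by norm_num) (w 0))
        simp only [Fin.zero_eta, Matrix.cons_val_zero, Pi.zero_apply]
        show _ = _
        field_simp [hsne n]
      · refine (tendsto_congr fun n => ?_).mpr (key 2 (by norm_num) (w 1))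
        simp
      · refine (tendsto_congr fun n => ?_).mpr (tendsto_const_nhds (x := (0 : ℂ)))
        simp
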